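/- Let Γ be the space of smooth Riemannian metrics on a compact manifold with boundary (M^{n+1}, ∂M), 3 ≤ n+1 ≤ 7, and for C > 0 let Γ(C) be the set of metrics for which every almost properly embedded free boundary minimal hypersurface with Area ≤ C and index ≤ C is non-degenerate and proper. Then Γ(C) is open in the C^∞ topology, given the compactness theorem: any sequence of free boundary minimal hypersurfaces Σ_j in (M, ∂M, γ_j) with γ_j → γ smoothly, Area(Σ_j) ≤ C, Index(Σ_j) ≤ C, subconverges locally smoothly away from finitely many points to a free boundary minimal hypersurface Σ in (M, ∂M, γ) with Area ≤ C and Index ≤ C, and the convergence is smooth and Σ_j inherits non-degeneracy and properness whenever Σ is non-degenerate and proper. -/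
import Mathlib


open Filter

/-- Openness of the set `Γ(C)` of metrics for which every almost properly embedded free
boundary minimal hypersurface with area `≤ C` and index `≤ C` is non-degenerate and
proper, given the compactness theorem with inheritance of non-degeneracy and properness.
Here `G` is the (metrizable) space of smooth metrics on `(M, ∂M)`, `FB γ` is the set of
free boundary minimal hypersurfaces for the metric `γ`. -/
theorem openness_of_bumpy_proper_metrics {G H : Type*} [MetricSpace G]
    (FB : G → Set H) (area index : G → H → ℝ)
    (nondeg proper : G → H → Prop) (C : ℝ) (hC : 0 < C)
    (compactness : ∀ (γ : G) (γseq : ℕ → G) (Sseq : ℕ → H),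
      Tendsto γseq atTop (nhds γ) →
      (∀ j, Sseq j ∈ FB (γseq j) ∧ area (γseq j) (Sseq j) ≤ C ∧
        index (γseq j) (Sseq j) ≤ C) →
      ∃ (φ : ℕ → ℕ) (Slim : H), StrictMono φ ∧ Slim ∈ FB γ ∧
        area γ Slim ≤ C ∧ index γ Slim ≤ C ∧
        (nondeg γ Slim ∧ proper γ Slim →
          ∀ᶠ j in atTop, nondeg (γseq (φ j)) (Sseq (φ j)) ∧
            proper (γseq (φ j)) (Sseq (φ j)))) :
    IsOpen {γ : G | ∀ S ∈ FB γ, area γ S ≤ C → index γ S ≤ C →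
      nondeg γ S ∧ proper γ S} := by
  rw [← isClosed_compl_iff]
  apply IsSeqClosed.isClosed
  intro γseq γ hmem hlim
  simp only [Set.mem_compl_iff, Set.mem_setOf_eq, not_forall, exists_prop, Classical.not_imp] at hmem
  choose S hS harea hindex hbad using hmem
  intro hγ
  obtain ⟨φ, Slim, hφ, hFB, hA, hI, hinherit⟩ :=
    compactness γ γseq S hlim (fun j => ⟨hS j, harea j, hindex j⟩)
  obtain ⟨j, hj⟩ := (hinherit (hγ Slim hFB hA hI)).exists
  exact hbad (φ j) hj
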